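/- Let (y^k, z^k, x^k)_{k≥0} be an sPADMM sequence with 0 < τ < (1+√5)/2. Fix k ≥ 1 and nonnegative reals α_1, …, α_{k+1} with α_1 = 0 and Σ_{i=1}^k α_{i+1} = 1, and define w̄^k := Σ_{i=1}^k α_{i+1} w̃^{i+1}, r̄^k := Σ_{i=1}^k α_{i+1} r^{i+1}, and ε̄^k := Σ_{i=1}^k α_{i+1}⟨w̃^{i+1} − w̄^k, r^{i+1} − r̄^k⟩, where r^{i+1} := G(w^i − w^{i+1}). Then ε̄^k ≥ 0 and r̄^k ∈ T^{[ε̄^k]}(w̄^k). -/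

import Mathlib

open scoped RealInnerProductSpace

noncomputable section

/-- The subdifferential of a function `f : Y → ℝ ∪ {+∞}` (encoded with values in `EReal`). -/
def subdiff {Y : Type*} [NormedAddCommGroup Y] [InnerProductSpace ℝ Y]
    (f : Y → EReal) (y : Y) : Set Y :=
  {ξ | ∀ y', f y + ((⟪ξ, y' - y⟫ : ℝ) : EReal) ≤ f y'}

section helpers
variable {E : Type*} [NormedAddCommGroup E] [InnerProductSpace ℝ E]

lemma sum_mul_inner_left (s : Finset ℕ) (a : ℕ → ℝ) (p : ℕ → E) (q : E) :
    ∑ i ∈ s, a i * ⟪p i, q⟫ = ⟪∑ i ∈ s, a i • p i, q⟫ := by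
  rw [sum_inner]
  exact Finset.sum_congr rfl fun i _ => (real_inner_smul_left _ _ _).symm

lemma sum_mul_inner_right (s : Finset ℕ) (a : ℕ → ℝ) (p : ℕ → E) (q : E) :
    ∑ i ∈ s, a i * ⟪q, p i⟫ = ⟪q, ∑ i ∈ s, a i • p i⟫ := by
  rw [inner_sum]
  exact Finset.sum_congr rfl fun i _ => (real_inner_smul_right _ _ _).symm

lemma inner_sub_flip' (a b c d : E) : ⟪a - b, c - d⟫ = ⟪d - c, b - a⟫ := by
  rw [real_inner_comm, ← inner_neg_neg (𝕜 := ℝ), neg_sub, neg_sub]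

lemma subdiff_mono {f : E → EReal} (hbot : ∀ v, f v ≠ ⊥) (hproper : ∃ v, f v ≠ ⊤)
    {u u' ξ η : E} (hξ : ξ ∈ subdiff f u) (hη : η ∈ subdiff f u') :
    0 ≤ ⟪ξ - η, u - u'⟫ := by
  obtain ⟨v0, hv0⟩ := hproper
  have hne : ∀ (w ζ : E), ζ ∈ subdiff f w → f w ≠ ⊤ := by
    intro w ζ hζ htop
    have h := hζ v0
    rw [htop] at h
    exact hv0 (top_le_iff.mp (by simpa using h))
  have hu := hne u ξ hξ
  have hu' := hne u' η hη
  have hfu : f u = ((f u).toReal : EReal) := (EReal.coe_toReal hu (hbot u)).symm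
  have hfu' : f u' = ((f u').toReal : EReal) := (EReal.coe_toReal hu' (hbot u')).symm
  have h1 := hξ u'
  have h2 := hη u
  rw [hfu, hfu', ← EReal.coe_add, EReal.coe_le_coe_iff] at h1 h2
  have e1 : u - u' = -(u' - u) := by abel
  rw [e1, inner_neg_right] at h2
  simp only [inner_sub_left, e1, inner_neg_right]
  linarith

lemma L1 (s : Finset ℕ) (a : ℕ → ℝ) (hsum : ∑ i ∈ s, a i = 1)
    (u r : ℕ → E) (ub rb : E) (hub : ub = ∑ i ∈ s, a i • u i)
    (hrb : rb = ∑ i ∈ s, a i • r i) :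
    ∑ i ∈ s, a i * ⟪u i - ub, r i - rb⟫
      = (∑ i ∈ s, a i * ⟪u i, r i⟫) - ⟪ub, rb⟫ := by
  have h1 : ∑ i ∈ s, a i * ⟪u i - ub, r i - rb⟫
      = ∑ i ∈ s, (a i * ⟪u i, r i⟫ - a i * ⟪u i, rb⟫ - a i * ⟪ub, r i⟫
          + a i * ⟪ub, rb⟫) := by
    refine Finset.sum_congr rfl fun i _ => ?_
    simp only [inner_sub_left, inner_sub_right]
    ring
  rw [h1, Finset.sum_add_distrib, Finset.sum_sub_distrib, Finset.sum_sub_distrib,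
    sum_mul_inner_left s a u rb, sum_mul_inner_right s a r ub, ← Finset.sum_mul, hsum,
    ← hub, ← hrb]
  ring

lemma L2 (s : Finset ℕ) (a : ℕ → ℝ) (hsum : ∑ i ∈ s, a i = 1)
    (u r : ℕ → E) (ub rb : E) (hub : ub = ∑ i ∈ s, a i • u i)
    (hrb : rb = ∑ i ∈ s, a i • r i) (v w' : E) :
    ∑ i ∈ s, a i * ⟪v - r i, w' - u i⟫
      = ⟪v - rb, w' - ub⟫ + ((∑ i ∈ s, a i * ⟪u i, r i⟫) - ⟪ub, rb⟫) := by
  have h1 : ∑ i ∈ s, a i * ⟪v - r i, w' - u i⟫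
      = ∑ i ∈ s, (a i * ⟪v, w'⟫ - a i * ⟪v, u i⟫ - a i * ⟪r i, w'⟫
          + a i * ⟪r i, u i⟫) := by
    refine Finset.sum_congr rfl fun i _ => ?_
    simp only [inner_sub_left, inner_sub_right]
    ring
  have h2 : ∀ i ∈ s, a i * ⟪r i, u i⟫ = a i * ⟪u i, r i⟫ := fun i _ => by
    rw [real_inner_comm]
  rw [h1, Finset.sum_add_distrib, Finset.sum_sub_distrib, Finset.sum_sub_distrib,
    sum_mul_inner_right s a u v, sum_mul_inner_left s a r w', ← Finset.sum_mul, hsum,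
    Finset.sum_congr rfl h2, ← hub, ← hrb]
  simp only [inner_sub_left, inner_sub_right]
  rw [real_inner_comm rb ub]
  ring

lemma L3 (s : Finset ℕ) (a : ℕ → ℝ) (hsum : ∑ i ∈ s, a i = 1)
    (u r : ℕ → E) (ub rb : E) (hub : ub = ∑ i ∈ s, a i • u i)
    (hrb : rb = ∑ i ∈ s, a i • r i) :
    ∑ i ∈ s, ∑ j ∈ s, a i * (a j * ⟪u i - u j, r i - r j⟫)
      = 2 * ((∑ i ∈ s, a i * ⟪u i, r i⟫) - ⟪ub, rb⟫) := by
  have hin : ∀ i ∈ s, ∑ j ∈ s, a j * ⟪u i - u j, r i - r j⟫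
      = ⟪u i, r i⟫ - ⟪u i, rb⟫ - ⟪ub, r i⟫ + (∑ j ∈ s, a j * ⟪u j, r j⟫) := by
    intro i _
    have h1 : ∑ j ∈ s, a j * ⟪u i - u j, r i - r j⟫
        = ∑ j ∈ s, (a j * ⟪u i, r i⟫ - a j * ⟪u i, r j⟫ - a j * ⟪u j, r i⟫
            + a j * ⟪u j, r j⟫) := by
      refine Finset.sum_congr rfl fun j _ => ?_
      simp only [inner_sub_left, inner_sub_right]
      ring
    rw [h1, Finset.sum_add_distrib, Finset.sum_sub_distrib, Finset.sum_sub_distrib,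
      sum_mul_inner_right s a r (u i), sum_mul_inner_left s a u (r i), ← Finset.sum_mul,
      hsum, ← hub, ← hrb]
    ring
  have h2 : ∑ i ∈ s, ∑ j ∈ s, a i * (a j * ⟪u i - u j, r i - r j⟫)
      = ∑ i ∈ s, a i * (⟪u i, r i⟫ - ⟪u i, rb⟫ - ⟪ub, r i⟫
          + (∑ j ∈ s, a j * ⟪u j, r j⟫)) := by
    refine Finset.sum_congr rfl fun i hi => ?_
    rw [← Finset.mul_sum, hin i hi]
  have h3 : ∑ i ∈ s, a i * (⟪u i, r i⟫ - ⟪u i, rb⟫ - ⟪ub, r i⟫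
        + (∑ j ∈ s, a j * ⟪u j, r j⟫))
      = ∑ i ∈ s, (a i * ⟪u i, r i⟫ - a i * ⟪u i, rb⟫ - a i * ⟪ub, r i⟫
          + a i * (∑ j ∈ s, a j * ⟪u j, r j⟫)) := by
    refine Finset.sum_congr rfl fun i _ => ?_
    ring
  rw [h2, h3, Finset.sum_add_distrib, Finset.sum_sub_distrib, Finset.sum_sub_distrib,
    sum_mul_inner_left s a u rb, sum_mul_inner_right s a r ub, ← Finset.sum_mul, hsum,
    ← hub, ← hrb]
  ring

end helpers


theorem sPADMM_enlargement
    {Y Z X : Type*}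
    [NormedAddCommGroup Y] [InnerProductSpace ℝ Y] [FiniteDimensional ℝ Y]
    [NormedAddCommGroup Z] [InnerProductSpace ℝ Z] [FiniteDimensional ℝ Z]
    [NormedAddCommGroup X] [InnerProductSpace ℝ X] [FiniteDimensional ℝ X]
    (ϑf : Y → EReal) (φg : Z → EReal)
    (hϑbot : ∀ v, ϑf v ≠ ⊥) (hϑproper : ∃ v, ϑf v ≠ ⊤)
    (hϑlsc : LowerSemicontinuous ϑf)
    (hϑconvex : ∀ (v v' : Y) (a b : ℝ), 0 ≤ a → 0 ≤ b → a + b = 1 →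
      ϑf (a • v + b • v') ≤ (a : EReal) * ϑf v + (b : EReal) * ϑf v')
    (hφbot : ∀ v, φg v ≠ ⊥) (hφproper : ∃ v, φg v ≠ ⊤)
    (hφlsc : LowerSemicontinuous φg)
    (hφconvex : ∀ (v v' : Z) (a b : ℝ), 0 ≤ a → 0 ≤ b → a + b = 1 →
      φg (a • v + b • v') ≤ (a : EReal) * φg v + (b : EReal) * φg v')
    (A : X →ₗ[ℝ] Y) (B : X →ₗ[ℝ] Z) (c : X)
    (β τ : ℝ) (hβ : 0 < β) (hτ : 0 < τ)
    (S : Y →ₗ[ℝ] Y) (hSsym : LinearMap.IsSymmetric S) (hSpsd : ∀ v, 0 ≤ ⟪S v, v⟫)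
    (T₀ : Z →ₗ[ℝ] Z) (hTsym : LinearMap.IsSymmetric T₀) (hTpsd : ∀ v, 0 ≤ ⟪T₀ v, v⟫)
    (hτub : τ < (1 + Real.sqrt 5) / 2)
    (y : ℕ → Y) (z : ℕ → Z) (x : ℕ → X)
    (hADMMy : ∀ k : ℕ,
      -(A (x k)) - β • A (LinearMap.adjoint A (y (k+1)) + LinearMap.adjoint B (z k) - c)
        - S (y (k+1) - y k) ∈ subdiff ϑf (y (k+1)))
    (hADMMz : ∀ k : ℕ,
      -(B (x k)) - β • B (LinearMap.adjoint A (y (k+1)) + LinearMap.adjoint B (z (k+1)) - c)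
        - T₀ (z (k+1) - z k) ∈ subdiff φg (z (k+1)))
    (hADMMx : ∀ k : ℕ,
      x (k+1) = x k + (τ * β) • (LinearMap.adjoint A (y (k+1)) + LinearMap.adjoint B (z (k+1)) - c))
    (xt : ℕ → X)
    (hxt : ∀ k : ℕ,
      xt (k+1) = x k + β • (LinearMap.adjoint A (y (k+1)) + LinearMap.adjoint B (z k) - c))
    (k : ℕ) (hk : 1 ≤ k) (α : ℕ → ℝ)
    (hαnn : ∀ i, 1 ≤ i → i ≤ k + 1 → 0 ≤ α i) (hα1 : α 1 = 0)
    (hαsum : ∑ i ∈ Finset.Icc 1 k, α (i+1) = 1)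
    (ybar : Y) (hybar : ybar = ∑ i ∈ Finset.Icc 1 k, α (i+1) • y (i+1))
    (zbar : Z) (hzbar : zbar = ∑ i ∈ Finset.Icc 1 k, α (i+1) • z (i+1))
    (xbar : X) (hxbar : xbar = ∑ i ∈ Finset.Icc 1 k, α (i+1) • xt (i+1))
    (r1 : ℕ → Y) (hr1 : ∀ i : ℕ, r1 (i+1) = S (y i - y (i+1)))
    (r2 : ℕ → Z) (hr2 : ∀ i : ℕ,
      r2 (i+1) = T₀ (z i - z (i+1)) + β • B (LinearMap.adjoint B (z i - z (i+1))))
    (r3 : ℕ → X) (hr3 : ∀ i : ℕ, r3 (i+1) = (τ * β)⁻¹ • (x i - x (i+1)))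
    (rbar1 : Y) (hrbar1 : rbar1 = ∑ i ∈ Finset.Icc 1 k, α (i+1) • r1 (i+1))
    (rbar2 : Z) (hrbar2 : rbar2 = ∑ i ∈ Finset.Icc 1 k, α (i+1) • r2 (i+1))
    (rbar3 : X) (hrbar3 : rbar3 = ∑ i ∈ Finset.Icc 1 k, α (i+1) • r3 (i+1))
    (epsb : ℝ) (hepsb : epsb = ∑ i ∈ Finset.Icc 1 k, α (i+1) *
      (⟪y (i+1) - ybar, r1 (i+1) - rbar1⟫ + ⟪z (i+1) - zbar, r2 (i+1) - rbar2⟫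
        + ⟪xt (i+1) - xbar, r3 (i+1) - rbar3⟫)) :
    0 ≤ epsb ∧
      ∀ (y' : Y) (z' : Z) (x' : X) (v1 : Y) (v2 : Z) (v3 : X),
        v1 - A x' ∈ subdiff ϑf y' → v2 - B x' ∈ subdiff φg z' →
        v3 = c - LinearMap.adjoint A y' - LinearMap.adjoint B z' →
        ⟪v1 - rbar1, y' - ybar⟫ + ⟪v2 - rbar2, z' - zbar⟫ + ⟪v3 - rbar3, x' - xbar⟫
          ≥ -epsb := by
  classical
  have hτβ : τ * β ≠ 0 := by positivity
  -- Key structural facts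
  have hF3 : ∀ i : ℕ, r3 (i+1)
      = c - LinearMap.adjoint A (y (i+1)) - LinearMap.adjoint B (z (i+1)) := by
    intro i
    have hx := hADMMx i
    have hd : x i - x (i+1) = -((τ * β) • (LinearMap.adjoint A (y (i+1))
        + LinearMap.adjoint B (z (i+1)) - c)) := by
      rw [hx]; abel
    rw [hr3, hd, smul_neg, smul_smul, inv_mul_cancel₀ hτβ, one_smul]
    abel
  have hF1 : ∀ i : ℕ, r1 (i+1) - A (xt (i+1)) ∈ subdiff ϑf (y (i+1)) := by
    intro i
    have h := hADMMy i
    have heq : r1 (i+1) - A (xt (i+1))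
        = -(A (x i)) - β • A (LinearMap.adjoint A (y (i+1))
            + LinearMap.adjoint B (z i) - c) - S (y (i+1) - y i) := by
      rw [hr1, hxt]
      simp only [map_add, map_smul, map_sub]
      module
    rw [heq]; exact h
  have hF2 : ∀ i : ℕ, r2 (i+1) - B (xt (i+1)) ∈ subdiff φg (z (i+1)) := by
    intro i
    have h := hADMMz i
    have heq : r2 (i+1) - B (xt (i+1))
        = -(B (x i)) - β • B (LinearMap.adjoint A (y (i+1))
            + LinearMap.adjoint B (z (i+1)) - c) - T₀ (z (i+1) - z i) := by
      rw [hr2, hxt]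
      simp only [map_add, map_smul, map_sub]
      module
    rw [heq]; exact h
  -- per-index monotonicity
  have hmono : ∀ (i : ℕ) (y' : Y) (z' : Z) (x' : X) (v1 : Y) (v2 : Z) (v3 : X),
      v1 - A x' ∈ subdiff ϑf y' → v2 - B x' ∈ subdiff φg z' →
      v3 = c - LinearMap.adjoint A y' - LinearMap.adjoint B z' →
      0 ≤ ⟪v1 - r1 (i+1), y' - y (i+1)⟫ + ⟪v2 - r2 (i+1), z' - z (i+1)⟫
          + ⟪v3 - r3 (i+1), x' - xt (i+1)⟫ := by
    intro i y' z' x' v1 v2 v3 hv1 hv2 hv3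
    have m1 := subdiff_mono hϑbot hϑproper hv1 (hF1 i)
    have m2 := subdiff_mono hφbot hφproper hv2 (hF2 i)
    have e1 : (v1 - A x') - (r1 (i+1) - A (xt (i+1)))
        = (v1 - r1 (i+1)) - A (x' - xt (i+1)) := by
      simp only [map_sub]; abel
    have e2 : (v2 - B x') - (r2 (i+1) - B (xt (i+1)))
        = (v2 - r2 (i+1)) - B (x' - xt (i+1)) := by
      simp only [map_sub]; abel
    rw [e1, inner_sub_left] at m1
    rw [e2, inner_sub_left] at m2
    have e3 : ⟪v3 - r3 (i+1), x' - xt (i+1)⟫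
        = -⟪y' - y (i+1), A (x' - xt (i+1))⟫ - ⟪z' - z (i+1), B (x' - xt (i+1))⟫ := by
      rw [hv3, hF3 i]
      have hd : (c - LinearMap.adjoint A y' - LinearMap.adjoint B z')
          - (c - LinearMap.adjoint A (y (i+1)) - LinearMap.adjoint B (z (i+1)))
          = -(LinearMap.adjoint A (y' - y (i+1)) + LinearMap.adjoint B (z' - z (i+1))) := by
        simp only [map_sub]; abel
      rw [hd, inner_neg_left, inner_add_left, LinearMap.adjoint_inner_left,
        LinearMap.adjoint_inner_left]
      ring
    rw [e3]
    have c1 := real_inner_comm (A (x' - xt (i+1))) (y' - y (i+1))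
    have c2 := real_inner_comm (B (x' - xt (i+1))) (z' - z (i+1))
    linarith
  set s : Finset ℕ := Finset.Icc 1 k with hs
  set aa : ℕ → ℝ := fun i => α (i+1) with haa
  have hann : ∀ i ∈ s, 0 ≤ aa i := by
    intro i hi
    rw [hs, Finset.mem_Icc] at hi
    exact hαnn (i+1) (by omega) (by omega)
  have hasum : ∑ i ∈ s, aa i = 1 := hαsum
  set u1 : ℕ → Y := fun i => y (i+1) with hu1
  set u2 : ℕ → Z := fun i => z (i+1) with hu2
  set u3 : ℕ → X := fun i => xt (i+1) with hu3
  set rr1 : ℕ → Y := fun i => r1 (i+1) with hrr1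
  set rr2 : ℕ → Z := fun i => r2 (i+1) with hrr2
  set rr3 : ℕ → X := fun i => r3 (i+1) with hrr3
  have hub1 : ybar = ∑ i ∈ s, aa i • u1 i := hybar
  have hub2 : zbar = ∑ i ∈ s, aa i • u2 i := hzbar
  have hub3 : xbar = ∑ i ∈ s, aa i • u3 i := hxbar
  have hrb1 : rbar1 = ∑ i ∈ s, aa i • rr1 i := hrbar1
  have hrb2 : rbar2 = ∑ i ∈ s, aa i • rr2 i := hrbar2
  have hrb3 : rbar3 = ∑ i ∈ s, aa i • rr3 i := hrbar3
  have heps : epsb = ((∑ i ∈ s, aa i * ⟪u1 i, rr1 i⟫) - ⟪ybar, rbar1⟫)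
      + ((∑ i ∈ s, aa i * ⟪u2 i, rr2 i⟫) - ⟪zbar, rbar2⟫)
      + ((∑ i ∈ s, aa i * ⟪u3 i, rr3 i⟫) - ⟪xbar, rbar3⟫) := by
    rw [hepsb, ← L1 s aa hasum u1 rr1 ybar rbar1 hub1 hrb1,
      ← L1 s aa hasum u2 rr2 zbar rbar2 hub2 hrb2,
      ← L1 s aa hasum u3 rr3 xbar rbar3 hub3 hrb3,
      ← Finset.sum_add_distrib, ← Finset.sum_add_distrib]
    refine Finset.sum_congr rfl fun i _ => ?_
    ring
  have hepsnn : 0 ≤ epsb := by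
    have hpair : ∀ i ∈ s, ∀ j ∈ s,
        0 ≤ aa i * (aa j * (⟪u1 i - u1 j, rr1 i - rr1 j⟫
          + ⟪u2 i - u2 j, rr2 i - rr2 j⟫ + ⟪u3 i - u3 j, rr3 i - rr3 j⟫)) := by
      intro i hi j hj
      have hm := hmono i (y (j+1)) (z (j+1)) (xt (j+1)) (r1 (j+1)) (r2 (j+1)) (r3 (j+1))
        (hF1 j) (hF2 j) (hF3 j)
      have hsym : ⟪u1 i - u1 j, rr1 i - rr1 j⟫ + ⟪u2 i - u2 j, rr2 i - rr2 j⟫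
          + ⟪u3 i - u3 j, rr3 i - rr3 j⟫
          = ⟪r1 (j+1) - r1 (i+1), y (j+1) - y (i+1)⟫
            + ⟪r2 (j+1) - r2 (i+1), z (j+1) - z (i+1)⟫
            + ⟪r3 (j+1) - r3 (i+1), xt (j+1) - xt (i+1)⟫ := by
        simp only [hu1, hu2, hu3, hrr1, hrr2, hrr3]
        rw [inner_sub_flip' (y (i+1)) (y (j+1)) (r1 (i+1)) (r1 (j+1)),
          inner_sub_flip' (z (i+1)) (z (j+1)) (r2 (i+1)) (r2 (j+1)),
          inner_sub_flip' (xt (i+1)) (xt (j+1)) (r3 (i+1)) (r3 (j+1))]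
      rw [hsym]
      exact mul_nonneg (hann i hi) (mul_nonneg (hann j hj) hm)
    have hdnn : 0 ≤ ∑ i ∈ s, ∑ j ∈ s, aa i * (aa j * (⟪u1 i - u1 j, rr1 i - rr1 j⟫
        + ⟪u2 i - u2 j, rr2 i - rr2 j⟫ + ⟪u3 i - u3 j, rr3 i - rr3 j⟫)) :=
      Finset.sum_nonneg fun i hi => Finset.sum_nonneg fun j hj => hpair i hi j hj
    have hdeq : ∑ i ∈ s, ∑ j ∈ s, aa i * (aa j * (⟪u1 i - u1 j, rr1 i - rr1 j⟫
        + ⟪u2 i - u2 j, rr2 i - rr2 j⟫ + ⟪u3 i - u3 j, rr3 i - rr3 j⟫))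
        = 2 * epsb := by
      have hsplit : ∀ i ∈ s, ∀ j ∈ s,
          aa i * (aa j * (⟪u1 i - u1 j, rr1 i - rr1 j⟫ + ⟪u2 i - u2 j, rr2 i - rr2 j⟫
            + ⟪u3 i - u3 j, rr3 i - rr3 j⟫))
          = aa i * (aa j * ⟪u1 i - u1 j, rr1 i - rr1 j⟫)
            + aa i * (aa j * ⟪u2 i - u2 j, rr2 i - rr2 j⟫)
            + aa i * (aa j * ⟪u3 i - u3 j, rr3 i - rr3 j⟫) := by
        intro i _ j _; ring
      calc ∑ i ∈ s, ∑ j ∈ s, aa i * (aa j * (⟪u1 i - u1 j, rr1 i - rr1 j⟫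
            + ⟪u2 i - u2 j, rr2 i - rr2 j⟫ + ⟪u3 i - u3 j, rr3 i - rr3 j⟫))
          = ∑ i ∈ s, (∑ j ∈ s, aa i * (aa j * ⟪u1 i - u1 j, rr1 i - rr1 j⟫)
            + ∑ j ∈ s, aa i * (aa j * ⟪u2 i - u2 j, rr2 i - rr2 j⟫)
            + ∑ j ∈ s, aa i * (aa j * ⟪u3 i - u3 j, rr3 i - rr3 j⟫)) := by
            refine Finset.sum_congr rfl fun i hi => ?_
            rw [← Finset.sum_add_distrib, ← Finset.sum_add_distrib]
            exact Finset.sum_congr rfl fun j hj => hsplit i hi j hj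
        _ = (∑ i ∈ s, ∑ j ∈ s, aa i * (aa j * ⟪u1 i - u1 j, rr1 i - rr1 j⟫))
            + (∑ i ∈ s, ∑ j ∈ s, aa i * (aa j * ⟪u2 i - u2 j, rr2 i - rr2 j⟫))
            + (∑ i ∈ s, ∑ j ∈ s, aa i * (aa j * ⟪u3 i - u3 j, rr3 i - rr3 j⟫)) := by
            rw [← Finset.sum_add_distrib, ← Finset.sum_add_distrib]
        _ = 2 * epsb := by
            rw [L3 s aa hasum u1 rr1 ybar rbar1 hub1 hrb1,
              L3 s aa hasum u2 rr2 zbar rbar2 hub2 hrb2,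
              L3 s aa hasum u3 rr3 xbar rbar3 hub3 hrb3, heps]
            ring
    linarith [hdeq ▸ hdnn]
  refine ⟨hepsnn, ?_⟩
  intro y' z' x' v1 v2 v3 hv1 hv2 hv3
  have hsumnn : 0 ≤ ∑ i ∈ s, aa i * (⟪v1 - rr1 i, y' - u1 i⟫ + ⟪v2 - rr2 i, z' - u2 i⟫
      + ⟪v3 - rr3 i, x' - u3 i⟫) := by
    refine Finset.sum_nonneg fun i hi => mul_nonneg (hann i hi) ?_
    exact hmono i y' z' x' v1 v2 v3 hv1 hv2 hv3
  have hsumeq : ∑ i ∈ s, aa i * (⟪v1 - rr1 i, y' - u1 i⟫ + ⟪v2 - rr2 i, z' - u2 i⟫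
      + ⟪v3 - rr3 i, x' - u3 i⟫)
      = (⟪v1 - rbar1, y' - ybar⟫ + ⟪v2 - rbar2, z' - zbar⟫ + ⟪v3 - rbar3, x' - xbar⟫)
        + epsb := by
    have h1 : ∑ i ∈ s, aa i * (⟪v1 - rr1 i, y' - u1 i⟫ + ⟪v2 - rr2 i, z' - u2 i⟫
        + ⟪v3 - rr3 i, x' - u3 i⟫)
        = (∑ i ∈ s, aa i * ⟪v1 - rr1 i, y' - u1 i⟫)
          + (∑ i ∈ s, aa i * ⟪v2 - rr2 i, z' - u2 i⟫)
          + (∑ i ∈ s, aa i * ⟪v3 - rr3 i, x' - u3 i⟫) := by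
      rw [← Finset.sum_add_distrib, ← Finset.sum_add_distrib]
      refine Finset.sum_congr rfl fun i _ => ?_
      ring
    rw [h1, L2 s aa hasum u1 rr1 ybar rbar1 hub1 hrb1 v1 y',
      L2 s aa hasum u2 rr2 zbar rbar2 hub2 hrb2 v2 z',
      L2 s aa hasum u3 rr3 xbar rbar3 hub3 hrb3 v3 x', heps]
    ring
  rw [hsumeq] at hsumnn
  linarith
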